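/- For the Black-Scholes call price P(S,K,τ,σ) = S·Φ(d₊) − K·Φ(d₋) with d± = log(S/K)/(σ√τ) ± σ√τ/2, the theta satisfies ∂P/∂τ = S·φ(d₊)·σ/(2√τ). -/

import Mathlib

open Real MeasureTheory

/-- Standard normal probability density function. -/
noncomputable def stdPdf (x : ℝ) : ℝ := (Real.sqrt (2 * Real.pi))⁻¹ * Real.exp (-x ^ 2 / 2)

/-- Standard normal cumulative distribution function. -/
noncomputable def stdCdf (x : ℝ) : ℝ := ∫ t in Set.Iic x, stdPdf t

/-- Black-Scholes call price. -/
noncomputable def bsPrice (S K τ σ : ℝ) : ℝ :=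
  S * stdCdf (Real.log (S / K) / (σ * Real.sqrt τ) + σ * Real.sqrt τ / 2)
    - K * stdCdf (Real.log (S / K) / (σ * Real.sqrt τ) - σ * Real.sqrt τ / 2)

lemma continuous_stdPdf : Continuous stdPdf := by
  unfold stdPdf; continuity

lemma integrable_stdPdf : Integrable stdPdf := by
  have h : Integrable (fun x : ℝ => (Real.sqrt (2 * Real.pi))⁻¹ * Real.exp (-(1/2 : ℝ) * x ^ 2)) :=
    (integrable_exp_neg_mul_sq (by norm_num)).const_mul _
  refine h.congr ?_
  filter_upwards with x
  unfold stdPdf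
  rw [show (-(1/2 : ℝ) * x ^ 2) = -x ^ 2 / 2 by ring]

lemma hasDerivAt_stdCdf (x : ℝ) : HasDerivAt stdCdf (stdPdf x) x := by
  have key : ∀ y : ℝ, stdCdf y = stdCdf 0 + ∫ t in (0:ℝ)..y, stdPdf t := by
    intro y
    have h := intervalIntegral.integral_Iic_sub_Iic (μ := volume)
      integrable_stdPdf.integrableOn integrable_stdPdf.integrableOn (f := stdPdf) (a := 0) (b := y)
    unfold stdCdf
    linarith [h]
  have hderiv : HasDerivAt (fun y => ∫ t in (0:ℝ)..y, stdPdf t) (stdPdf x) x :=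
    intervalIntegral.integral_hasDerivAt_right
      (integrable_stdPdf.intervalIntegrable)
      continuous_stdPdf.aestronglyMeasurable.stronglyMeasurableAtFilter
      continuous_stdPdf.continuousAt
  have := hderiv.const_add (stdCdf 0)
  rw [show stdCdf = fun y => stdCdf 0 + ∫ t in (0:ℝ)..y, stdPdf t from funext key]
  exact this

/-- The Black-Scholes theta: ∂P/∂τ = S·φ(d₊)·σ/(2√τ). -/
theorem bs_theta (S K τ σ : ℝ) (hS : 0 < S) (hK : 0 < K) (hτ : 0 < τ) (hσ : 0 < σ) :
    HasDerivAt (fun t => bsPrice S K t σ)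
      (S * stdPdf (Real.log (S / K) / (σ * Real.sqrt τ) + σ * Real.sqrt τ / 2) * σ /
        (2 * Real.sqrt τ)) τ := by
  have hs : (0:ℝ) < Real.sqrt τ := Real.sqrt_pos.mpr hτ
  have hs0 : Real.sqrt τ ≠ 0 := hs.ne'
  have hσ0 : σ ≠ 0 := hσ.ne'
  have hσs : σ * Real.sqrt τ ≠ 0 := mul_ne_zero hσ0 hs0
  set L : ℝ := Real.log (S / K) with hL
  have hsq : HasDerivAt Real.sqrt (1 / (2 * Real.sqrt τ)) τ := Real.hasDerivAt_sqrt hτ.ne'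
  have h1 : HasDerivAt (fun t => σ * Real.sqrt t) (σ * (1 / (2 * Real.sqrt τ))) τ := hsq.const_mul σ
  have h2 : HasDerivAt (fun t => L / (σ * Real.sqrt t))
      ((0 * (σ * Real.sqrt τ) - L * (σ * (1 / (2 * Real.sqrt τ)))) / (σ * Real.sqrt τ) ^ 2) τ :=
    (hasDerivAt_const τ L).div h1 hσs
  set D : ℝ := (0 * (σ * Real.sqrt τ) - L * (σ * (1 / (2 * Real.sqrt τ)))) / (σ * Real.sqrt τ) ^ 2
  set E : ℝ := σ * (1 / (2 * Real.sqrt τ)) / 2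
  have hplus : HasDerivAt (fun t => L / (σ * Real.sqrt t) + σ * Real.sqrt t / 2) (D + E) τ :=
    h2.add (h1.div_const 2)
  have hminus : HasDerivAt (fun t => L / (σ * Real.sqrt t) - σ * Real.sqrt t / 2) (D - E) τ :=
    h2.sub (h1.div_const 2)
  have hP : HasDerivAt (fun t => bsPrice S K t σ)
      (S * (stdPdf (L / (σ * Real.sqrt τ) + σ * Real.sqrt τ / 2) * (D + E))
        - K * (stdPdf (L / (σ * Real.sqrt τ) - σ * Real.sqrt τ / 2) * (D - E))) τ := by
    unfold bsPrice
    exact (((hasDerivAt_stdCdf _).comp τ hplus).const_mul S).sub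
      (((hasDerivAt_stdCdf _).comp τ hminus).const_mul K)
  have key : K * stdPdf (L / (σ * Real.sqrt τ) - σ * Real.sqrt τ / 2)
      = S * stdPdf (L / (σ * Real.sqrt τ) + σ * Real.sqrt τ / 2) := by
    unfold stdPdf
    rw [show (-(L / (σ * Real.sqrt τ) - σ * Real.sqrt τ / 2) ^ 2 / 2 : ℝ)
        = -(L / (σ * Real.sqrt τ) + σ * Real.sqrt τ / 2) ^ 2 / 2 + L from by
      field_simp; ring, Real.exp_add, hL, Real.exp_log (div_pos hS hK)]
    field_simp
  convert hP using 1
  have h2E : 2 * E = σ / (2 * Real.sqrt τ) := by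
    simp only [E]
    field_simp
  calc S * stdPdf (L / (σ * Real.sqrt τ) + σ * Real.sqrt τ / 2) * σ / (2 * Real.sqrt τ)
      = S * stdPdf (L / (σ * Real.sqrt τ) + σ * Real.sqrt τ / 2) * (2 * E) := by
        rw [h2E]; ring
    _ = S * (stdPdf (L / (σ * Real.sqrt τ) + σ * Real.sqrt τ / 2) * (D + E))
        - K * (stdPdf (L / (σ * Real.sqrt τ) - σ * Real.sqrt τ / 2) * (D - E)) := by
        rw [show K * (stdPdf (L / (σ * Real.sqrt τ) - σ * Real.sqrt τ / 2) * (D - E))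
            = (K * stdPdf (L / (σ * Real.sqrt τ) - σ * Real.sqrt τ / 2)) * (D - E) by ring,
          key]
        ring
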